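/- For every θ ∈ (0,∞)^m, every i ∈ {1,…,m}, every positive integer N, and every ε > 0, there exists a temperature τ̃ > 0 such that the mean squared error of the N-sample Smoothed-Autodiff estimator with temperature τ̃, namely (E_Z[∂_{θ_i} G(h_{τ̃}(Z,θ))] − D_i(θ))² + (1/N)·Var_Z(∂_{θ_i} G(h_{τ̃}(Z,θ))), is at most D_i(θ)² + ε; in particular the mean squared error of the Smoothed-Autodiff estimator remains bounded even in regimes where the REINFORCE mean squared error is unbounded. -/

import Mathlib

open Real Finset Filter MeasureTheory

/-- The Gumbel(0,1) measure on ℝ, with Lebesgue density `exp(−x − exp(−x))`. -/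
noncomputable def gumbel : Measure ℝ :=
  volume.withDensity fun x => ENNReal.ofReal (Real.exp (-x - Real.exp (-x)))

/-- The law of `Z = (Z_1,…,Z_m)` with i.i.d. Gumbel(0,1) coordinates. -/
noncomputable def gumbelPi (m : ℕ) : Measure (Fin m → ℝ) :=
  Measure.pi fun _ => gumbel

/-- Softmax weight `w_i^τ(z,θ) = exp((log θ_i + z_i)/τ) / ∑_j exp((log θ_j + z_j)/τ)`. -/
noncomputable def softW {m : ℕ} (τ : ℝ) (θ z : Fin m → ℝ) (i : Fin m) : ℝ :=
  Real.exp ((Real.log (θ i) + z i) / τ) / ∑ j, Real.exp ((Real.log (θ j) + z j) / τ)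

/-- Smoothed action `h_τ(z,θ) = ∑_i a_i · w_i^τ(z,θ)`. -/
noncomputable def hTau {m : ℕ} (τ : ℝ) (a θ z : Fin m → ℝ) : ℝ :=
  ∑ i, a i * softW τ θ z i

/-- Single-sample Smoothed-Autodiff gradient `∂_{θ_i} G(h_τ(z,θ))`. -/
noncomputable def saGrad {m : ℕ} (τ : ℝ) (a : Fin m → ℝ) (G : ℝ → ℝ)
    (θ : Fin m → ℝ) (i : Fin m) (z : Fin m → ℝ) : ℝ :=
  deriv (fun t : ℝ => G (hTau τ a (Function.update θ i t) z)) (θ i)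

/-- `Var_Z(∂_{θ_i} G(h_τ(Z,θ)))` for `Z` with i.i.d. Gumbel(0,1) coordinates. -/
noncomputable def saVar {m : ℕ} (τ : ℝ) (a : Fin m → ℝ) (G : ℝ → ℝ)
    (θ : Fin m → ℝ) (i : Fin m) : ℝ :=
  (∫ z, (saGrad τ a G θ i z) ^ 2 ∂(gumbelPi m)) -
    (∫ z, saGrad τ a G θ i z ∂(gumbelPi m)) ^ 2

/-! ### Auxiliary material: the Gumbel measure is a probability measure -/

lemma gumbel_integral_eq_one : ∫ x : ℝ, Real.exp (-x - Real.exp (-x)) = 1 := by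
  have hinj : Set.InjOn (fun x : ℝ => Real.exp (-x)) Set.univ := by
    intro x _ y _ h
    simpa using Real.exp_injective h
  have hderiv : ∀ x ∈ (Set.univ : Set ℝ),
      HasDerivWithinAt (fun x : ℝ => Real.exp (-x)) (-Real.exp (-x)) Set.univ x := by
    intro x _
    simpa using (hasDerivAt_neg x).exp
  have himg : (fun x : ℝ => Real.exp (-x)) '' Set.univ = Set.Ioi 0 := by
    rw [Set.image_univ]
    ext y
    constructor
    · rintro ⟨x, rfl⟩; exact Real.exp_pos _
    · intro hy; exact ⟨-Real.log y, by simp [Real.exp_log hy]⟩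
  have := integral_image_eq_integral_abs_deriv_smul (f := fun x : ℝ => Real.exp (-x))
    (f' := fun x => -Real.exp (-x)) MeasurableSet.univ hderiv hinj (fun u => Real.exp (-u))
  rw [himg] at this
  rw [Measure.restrict_univ] at this
  have h1 : ∫ x : ℝ in Set.Ioi 0, Real.exp (-x) = 1 := by
    simpa using integral_exp_neg_Ioi 0
  rw [h1] at this
  rw [this]
  congr 1
  ext x
  rw [abs_neg, abs_of_pos (Real.exp_pos _), smul_eq_mul, ← Real.exp_add]
  ring_nf

lemma gumbel_integrable : Integrable (fun x : ℝ => Real.exp (-x - Real.exp (-x))) := by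
  have hinj : Set.InjOn (fun x : ℝ => Real.exp (-x)) Set.univ := by
    intro x _ y _ h
    simpa using Real.exp_injective h
  have hderiv : ∀ x ∈ (Set.univ : Set ℝ),
      HasDerivWithinAt (fun x : ℝ => Real.exp (-x)) (-Real.exp (-x)) Set.univ x := by
    intro x _
    simpa using (hasDerivAt_neg x).exp
  have himg : (fun x : ℝ => Real.exp (-x)) '' Set.univ = Set.Ioi 0 := by
    rw [Set.image_univ]
    ext y
    constructor
    · rintro ⟨x, rfl⟩; exact Real.exp_pos _
    · intro hy; exact ⟨-Real.log y, by simp [Real.exp_log hy]⟩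
  have := (integrableOn_image_iff_integrableOn_abs_deriv_smul (f := fun x : ℝ => Real.exp (-x))
    (f' := fun x => -Real.exp (-x)) MeasurableSet.univ hderiv hinj (fun u => Real.exp (-u)))
  rw [himg] at this
  have hL : IntegrableOn (fun u : ℝ => Real.exp (-u)) (Set.Ioi 0) := by
    simpa using exp_neg_integrableOn_Ioi 0 one_pos
  have h2 := this.mp hL
  rw [IntegrableOn, Measure.restrict_univ] at h2
  convert h2 using 2 with x
  rw [abs_neg, abs_of_pos (Real.exp_pos _), smul_eq_mul, ← Real.exp_add]
  ring_nf

instance : IsProbabilityMeasure gumbel := by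
  constructor
  rw [gumbel, withDensity_apply _ MeasurableSet.univ, Measure.restrict_univ,
    ← ofReal_integral_eq_lintegral_ofReal gumbel_integrable
      (Filter.Eventually.of_forall fun x => (Real.exp_pos _).le),
    gumbel_integral_eq_one]
  simp

instance (m : ℕ) : IsProbabilityMeasure (gumbelPi m) := by
  unfold gumbelPi
  infer_instance

/-! ### Auxiliary material: derivative of the smoothed action in `θ i` -/

noncomputable def uu {m : ℕ} (τ : ℝ) (θ z : Fin m → ℝ) (j : Fin m) : ℝ :=
  Real.exp ((Real.log (θ j) + z j) / τ)

noncomputable def SS {m : ℕ} (τ : ℝ) (θ z : Fin m → ℝ) : ℝ := ∑ j, uu τ θ z j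

noncomputable def hd {m : ℕ} (τ : ℝ) (a θ : Fin m → ℝ) (i : Fin m) (z : Fin m → ℝ) : ℝ :=
  (uu τ θ z i / (τ * θ i)) *
    ((a i * SS τ θ z - ∑ j, a j * uu τ θ z j) / (SS τ θ z) ^ 2)

lemma uu_pos {m : ℕ} (τ : ℝ) (θ z : Fin m → ℝ) (j : Fin m) : 0 < uu τ θ z j :=
  Real.exp_pos _

lemma SS_pos {m : ℕ} [NeZero m] (τ : ℝ) (θ z : Fin m → ℝ) : 0 < SS τ θ z :=
  Finset.sum_pos (fun j _ => uu_pos τ θ z j) Finset.univ_nonempty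

lemma hTau_eq {m : ℕ} (τ : ℝ) (a θ z : Fin m → ℝ) :
    hTau τ a θ z = (∑ j, a j * uu τ θ z j) / SS τ θ z := by
  simp only [hTau, softW, uu, SS, div_eq_mul_inv, Finset.sum_mul, mul_assoc]

lemma hTau_hasDerivAt {m : ℕ} [NeZero m] {τ : ℝ} (hτ : 0 < τ) (a θ z : Fin m → ℝ)
    (hθ : ∀ j, 0 < θ j) (i : Fin m) :
    HasDerivAt (fun t => hTau τ a (Function.update θ i t) z) (hd τ a θ i z) (θ i) := by
  set c : ℝ → ℝ := fun t => Real.exp ((Real.log t + z i) / τ) with hc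
  set A : ℝ := ∑ j ∈ Finset.univ.erase i, a j * uu τ θ z j with hA
  set B : ℝ := ∑ j ∈ Finset.univ.erase i, uu τ θ z j with hB
  have hBnn : 0 ≤ B := Finset.sum_nonneg fun j _ => (uu_pos τ θ z j).le
  have hcpos : ∀ t, 0 < c t := fun t => Real.exp_pos _
  have hfun : ∀ t, hTau τ a (Function.update θ i t) z = (A + a i * c t) / (B + c t) := by
    intro t
    rw [hTau_eq]
    have h1 : (∑ j, a j * uu τ (Function.update θ i t) z j) = A + a i * c t := by
      rw [← Finset.sum_erase_add _ _ (Finset.mem_univ i)]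
      congr 1
      · apply Finset.sum_congr rfl
        intro j hj
        simp [uu, Function.update_of_ne (Finset.ne_of_mem_erase hj)]
      · simp [uu, c]
    have h2 : SS τ (Function.update θ i t) z = B + c t := by
      rw [SS, ← Finset.sum_erase_add _ _ (Finset.mem_univ i)]
      congr 1
      · apply Finset.sum_congr rfl
        intro j hj
        simp [uu, Function.update_of_ne (Finset.ne_of_mem_erase hj)]
      · simp [uu, c]
    rw [h1, h2]
  have hcd : HasDerivAt c (c (θ i) / (τ * θ i)) (θ i) := by
    have h1 : HasDerivAt (fun t : ℝ => (Real.log t + z i) / τ) ((θ i)⁻¹ / τ) (θ i) :=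
      ((Real.hasDerivAt_log (hθ i).ne').add_const (z i)).div_const τ
    have h2 := h1.exp
    convert h2 using 1
    rw [hc]
    field_simp
  have hden : 0 < B + c (θ i) := by positivity
  have hquot := ((hasDerivAt_const (θ i) A).add (hcd.const_mul (a i))).div
      ((hasDerivAt_const (θ i) B).add hcd) hden.ne'
  simp only [zero_add] at hquot
  simp only [Pi.add_def, Pi.div_def] at hquot
  have hfe : (fun t => hTau τ a (Function.update θ i t) z)
      = fun t => (A + a i * c t) / (B + c t) := funext hfun
  rw [hfe]
  have hSeq : SS τ θ z = B + c (θ i) := by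
    rw [SS, ← Finset.sum_erase_add _ _ (Finset.mem_univ i)]
    rfl
  have hAeq : (∑ j, a j * uu τ θ z j) = A + a i * c (θ i) := by
    rw [← Finset.sum_erase_add _ _ (Finset.mem_univ i)]
    rfl
  have huc : uu τ θ z i = c (θ i) := rfl
  refine hquot.congr_deriv ?_
  rw [hd, hSeq, hAeq, huc]
  ring

lemma saGrad_eq {m : ℕ} [NeZero m] {τ : ℝ} (hτ : 0 < τ) (a : Fin m → ℝ) {G : ℝ → ℝ}
    (hG : Differentiable ℝ G) (θ z : Fin m → ℝ) (hθ : ∀ j, 0 < θ j) (i : Fin m) :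
    saGrad τ a G θ i z = deriv G (hTau τ a θ z) * hd τ a θ i z := by
  have hh := hTau_hasDerivAt hτ a θ z hθ i
  have hx : Function.update θ i (θ i) = θ := Function.update_eq_self i θ
  have hG2 : HasDerivAt G (deriv G (hTau τ a θ z)) (hTau τ a (Function.update θ i (θ i)) z) := by
    rw [hx]
    exact (hG _).hasDerivAt
  have hcomp := (hG2.comp (θ i) hh).deriv
  rw [Function.comp_def] at hcomp
  rw [saGrad, hcomp]

lemma hd_bound {m : ℕ} [NeZero m] {τ : ℝ} (hτ : 0 < τ) (a θ : Fin m → ℝ)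
    (hθ : ∀ j, 0 < θ j) (i : Fin m) (z : Fin m → ℝ) :
    |hd τ a θ i z| ≤ 2 * (∑ j, |a j|) / (τ * θ i) := by
  set M : ℝ := ∑ j, |a j| with hM
  set S : ℝ := SS τ θ z with hS
  have hSpos : 0 < S := SS_pos τ θ z
  have hupos : 0 < uu τ θ z i := uu_pos τ θ z i
  have huS : uu τ θ z i ≤ S := Finset.single_le_sum (fun j _ => (uu_pos τ θ z j).le)
    (Finset.mem_univ i)
  have hMnn : 0 ≤ M := Finset.sum_nonneg fun j _ => abs_nonneg _
  have haM : |a i| ≤ M := Finset.single_le_sum (fun j _ => abs_nonneg (a j)) (Finset.mem_univ i)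
  have hP : 0 < τ * θ i := mul_pos hτ (hθ i)
  have hnum : |a i * S - ∑ j, a j * uu τ θ z j| ≤ 2 * M * S := by
    have h1 : |∑ j, a j * uu τ θ z j| ≤ M * S := by
      calc |∑ j, a j * uu τ θ z j| ≤ ∑ j, |a j * uu τ θ z j| := Finset.abs_sum_le_sum_abs _ _
        _ ≤ ∑ j, |a j| * S := by
            apply Finset.sum_le_sum
            intro j _
            rw [abs_mul, abs_of_pos (uu_pos τ θ z j)]
            exact mul_le_mul_of_nonneg_left
              (Finset.single_le_sum (fun k _ => (uu_pos τ θ z k).le) (Finset.mem_univ j))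
              (abs_nonneg _)
        _ = M * S := by rw [← Finset.sum_mul]
    have h2 : |a i * S| ≤ M * S := by
      rw [abs_mul, abs_of_pos hSpos]
      exact mul_le_mul_of_nonneg_right haM hSpos.le
    calc |a i * S - ∑ j, a j * uu τ θ z j| ≤ |a i * S| + |∑ j, a j * uu τ θ z j| :=
          abs_sub _ _
      _ ≤ M * S + M * S := add_le_add h2 h1
      _ = 2 * M * S := by ring
  have heq : |hd τ a θ i z|
      = uu τ θ z i * |a i * S - ∑ j, a j * uu τ θ z j| / (τ * θ i * S ^ 2) := by
    rw [hd, abs_mul, abs_div, abs_div, abs_of_pos hupos, abs_of_pos hP,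
      abs_of_pos (pow_pos hSpos 2), ← hS]
    ring
  rw [heq, div_le_div_iff₀ (by positivity) hP]
  have key : uu τ θ z i * |a i * S - ∑ j, a j * uu τ θ z j| ≤ S * (2 * M * S) := by
    calc uu τ θ z i * |a i * S - ∑ j, a j * uu τ θ z j|
        ≤ S * |a i * S - ∑ j, a j * uu τ θ z j| :=
          mul_le_mul_of_nonneg_right huS (abs_nonneg _)
      _ ≤ S * (2 * M * S) := mul_le_mul_of_nonneg_left hnum hSpos.le
  nlinarith [hP.le, hSpos.le]

lemma hTau_mem_convexHull {m : ℕ} [NeZero m] (τ : ℝ) (a θ z : Fin m → ℝ) :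
    hTau τ a θ z ∈ convexHull ℝ (Set.range a) := by
  have h := Finset.centerMass_mem_convexHull (t := Finset.univ) (w := fun j => uu τ θ z j)
    (z := a) (fun j _ => (uu_pos τ θ z j).le) (SS_pos τ θ z) (fun j _ => Set.mem_range_self j)
  have heq : hTau τ a θ z = Finset.univ.centerMass (fun j => uu τ θ z j) a := by
    rw [hTau_eq, Finset.centerMass, smul_eq_mul, SS, div_eq_mul_inv, mul_comm]
    congr 1
    refine Finset.sum_congr rfl fun j _ => ?_
    rw [smul_eq_mul]
    ring
  rw [heq]
  exact h

lemma uu_continuous {m : ℕ} (τ : ℝ) (θ : Fin m → ℝ) (j : Fin m) :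
    Continuous fun z : Fin m → ℝ => uu τ θ z j :=
  Real.continuous_exp.comp (by fun_prop)

lemma SS_continuous {m : ℕ} (τ : ℝ) (θ : Fin m → ℝ) :
    Continuous fun z : Fin m → ℝ => SS τ θ z :=
  continuous_finset_sum _ fun j _ => uu_continuous τ θ j

lemma hTau_continuous {m : ℕ} [NeZero m] (τ : ℝ) (a θ : Fin m → ℝ) :
    Continuous fun z : Fin m → ℝ => hTau τ a θ z := by
  have : (fun z : Fin m → ℝ => hTau τ a θ z)
      = fun z => (∑ j, a j * uu τ θ z j) / SS τ θ z := funext fun z => hTau_eq τ a θ z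
  rw [this]
  exact (continuous_finset_sum _ fun j _ => continuous_const.mul (uu_continuous τ θ j)).div
    (SS_continuous τ θ) fun z => (SS_pos τ θ z).ne'

lemma hd_continuous {m : ℕ} [NeZero m] (τ : ℝ) (a θ : Fin m → ℝ) (i : Fin m) :
    Continuous fun z : Fin m → ℝ => hd τ a θ i z := by
  unfold hd
  exact ((uu_continuous τ θ i).div_const (τ * θ i)).mul
    (((continuous_const.mul (SS_continuous τ θ)).sub
      (continuous_finset_sum _ fun j _ => continuous_const.mul (uu_continuous τ θ j))).div
      ((SS_continuous τ θ).pow 2) fun z => pow_ne_zero 2 (SS_pos τ θ z).ne')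

set_option maxHeartbeats 1000000 in
/-- For every `θ ∈ (0,∞)^m`, coordinate `i`, positive `N`, and `ε > 0`, there is a
temperature `τ̃ > 0` such that the MSE of the `N`-sample Smoothed-Autodiff estimator with
temperature `τ̃` is at most `D_i(θ)² + ε`, where `D_i(θ) = ∂_{θ_i} E_θ[G]`; in particular
it remains bounded even where the REINFORCE MSE is unbounded. -/
theorem smoothed_autodiff_mse_bounded {m : ℕ} (hm : 2 ≤ m) (a : Fin m → ℝ)
    (G : ℝ → ℝ) (hG : Differentiable ℝ G) (Gbar : ℝ)
    (hG' : ∀ x ∈ convexHull ℝ (Set.range a), |deriv G x| ≤ Gbar)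
    (θ : Fin m → ℝ) (hθ : ∀ j, 0 < θ j) (i : Fin m) (N : ℕ) (hN : 0 < N)
    (ε : ℝ) (hε : 0 < ε) (Di : ℝ)
    (hD : HasDerivAt
      (fun t : ℝ => ∑ j, Function.update θ i t j * G (a j) / ∑ k, Function.update θ i t k)
      Di (θ i)) :
    ∃ τ : ℝ, 0 < τ ∧
      ((∫ z, saGrad τ a G θ i z ∂(gumbelPi m)) - Di) ^ 2
        + (1 / (N : ℝ)) * saVar τ a G θ i ≤ Di ^ 2 + ε := by
  haveI : NeZero m := ⟨by omega⟩
  have hGbar : 0 ≤ Gbar := le_trans (abs_nonneg _)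
    (hG' (a i) (subset_convexHull ℝ _ (Set.mem_range_self i)))
  obtain ⟨M, hM⟩ : ∃ x : ℝ, x = ∑ j, |a j| := ⟨_, rfl⟩
  have hMnn : 0 ≤ M := by
    rw [hM]; exact Finset.sum_nonneg fun j _ => abs_nonneg _
  obtain ⟨C0, hC0⟩ : ∃ x : ℝ, x = Gbar * (2 * M) / θ i := ⟨_, rfl⟩
  have hC0nn : 0 ≤ C0 := by
    rw [hC0]; exact div_nonneg (mul_nonneg hGbar (by linarith)) (hθ i).le
  have hX : 0 ≤ (2 * |Di| + 2) / ε := div_nonneg (by positivity) hε.le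
  obtain ⟨τ, hτdef⟩ : ∃ x : ℝ, x = (C0 + 1) * ((2 * |Di| + 2) / ε + 1) := ⟨_, rfl⟩
  have hτ : 0 < τ := by rw [hτdef]; nlinarith
  obtain ⟨C, hCdef⟩ : ∃ x : ℝ, x = Gbar * (2 * M / (τ * θ i)) := ⟨_, rfl⟩
  have hCnn : 0 ≤ C := by
    rw [hCdef]
    exact mul_nonneg hGbar (div_nonneg (by linarith) (mul_pos hτ (hθ i)).le)
  have hCC0 : C = C0 / τ := by
    rw [hCdef, hC0]
    field_simp
  have hC1 : C ≤ 1 := by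
    rw [hCC0, div_le_one hτ, hτdef]
    nlinarith
  have hC2 : C * (2 * |Di| + 2) ≤ ε := by
    rw [hCC0, div_mul_eq_mul_div, div_le_iff₀ hτ, hτdef]
    have hx : ε * ((2 * |Di| + 2) / ε) = 2 * |Di| + 2 := mul_div_cancel₀ _ hε.ne'
    nlinarith [abs_nonneg Di]
  refine ⟨τ, hτ, ?_⟩
  have hbound : ∀ z, |saGrad τ a G θ i z| ≤ C := by
    intro z
    rw [saGrad_eq hτ a hG θ z hθ i, abs_mul, hCdef, hM]
    exact mul_le_mul (hG' _ (hTau_mem_convexHull τ a θ z)) (hd_bound hτ a θ hθ i z)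
      (abs_nonneg _) hGbar
  have hmeasτ : Measurable (saGrad τ a G θ i) := by
    have heq : saGrad τ a G θ i = fun z => deriv G (hTau τ a θ z) * hd τ a θ i z :=
      funext fun z => saGrad_eq hτ a hG θ z hθ i
    rw [heq]
    exact ((measurable_deriv G).comp (hTau_continuous τ a θ).measurable).mul
      (hd_continuous τ a θ i).measurable
  have hint : Integrable (saGrad τ a G θ i) (gumbelPi m) :=
    ⟨hmeasτ.aestronglyMeasurable, HasFiniteIntegral.of_bounded (C := C)
      (ae_of_all _ fun z => by simpa [Real.norm_eq_abs] using hbound z)⟩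
  have hintsq : Integrable (fun z => saGrad τ a G θ i z ^ 2) (gumbelPi m) :=
    ⟨(hmeasτ.pow_const 2).aestronglyMeasurable, HasFiniteIntegral.of_bounded (C := C ^ 2)
      (ae_of_all _ fun z => by
        rw [Real.norm_eq_abs, abs_pow]
        exact pow_le_pow_left₀ (abs_nonneg _) (hbound z) 2)⟩
  have hIabs : |∫ z, saGrad τ a G θ i z ∂(gumbelPi m)| ≤ C := by
    have h := norm_integral_le_of_norm_le_const (μ := gumbelPi m) (f := saGrad τ a G θ i)
      (C := C) (ae_of_all _ fun z => by simpa [Real.norm_eq_abs] using hbound z)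
    simpa [Real.norm_eq_abs, measure_univ] using h
  have hI2le : (∫ z, saGrad τ a G θ i z ^ 2 ∂(gumbelPi m)) ≤ C ^ 2 := by
    calc (∫ z, saGrad τ a G θ i z ^ 2 ∂(gumbelPi m))
        ≤ ∫ _z, C ^ 2 ∂(gumbelPi m) := by
          apply integral_mono hintsq (integrable_const _)
          intro z
          have h := abs_le.mp (hbound z)
          exact sq_le_sq' (by linarith [h.1]) h.2
      _ = C ^ 2 := by simp [measure_univ]
  have hI2nn : (0:ℝ) ≤ ∫ z, saGrad τ a G θ i z ^ 2 ∂(gumbelPi m) :=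
    integral_nonneg fun z => sq_nonneg _
  rw [saVar]
  obtain ⟨I, hI⟩ : ∃ x : ℝ, x = ∫ z, saGrad τ a G θ i z ∂(gumbelPi m) := ⟨_, rfl⟩
  obtain ⟨I2, hI2⟩ : ∃ x : ℝ, x = ∫ z, saGrad τ a G θ i z ^ 2 ∂(gumbelPi m) := ⟨_, rfl⟩
  rw [← hI, ← hI2]
  rw [← hI] at hIabs
  rw [← hI2] at hI2le hI2nn
  have hIleC := abs_le.mp hIabs
  have hNpos : (0:ℝ) < N := by exact_mod_cast hN
  have hNle : (1:ℝ) / N ≤ 1 := by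
    rw [div_le_one hNpos]
    exact_mod_cast hN
  have hNnn : (0:ℝ) ≤ 1 / (N:ℝ) := by positivity
  have hVar : (1 / (N:ℝ)) * (I2 - I ^ 2) ≤ C ^ 2 := by
    rcases le_or_gt 0 (I2 - I ^ 2) with h | h
    · calc (1 / (N:ℝ)) * (I2 - I ^ 2) ≤ 1 * (I2 - I ^ 2) :=
          mul_le_mul_of_nonneg_right hNle h
        _ = I2 - I ^ 2 := one_mul _
        _ ≤ C ^ 2 := by nlinarith [sq_nonneg I]
    · nlinarith [mul_nonneg hNnn (neg_nonneg.mpr h.le), sq_nonneg C]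
  have hbias : (I - Di) ^ 2 ≤ Di ^ 2 + 2 * C * |Di| + C ^ 2 := by
    have h3 : -(I * Di) ≤ C * |Di| := by
      have h4 : |I * Di| ≤ C * |Di| := by
        rw [abs_mul]
        exact mul_le_mul_of_nonneg_right hIabs (abs_nonneg _)
      linarith [neg_abs_le (I * Di)]
    have h5 : I ^ 2 ≤ C ^ 2 := by nlinarith [hIleC.1, hIleC.2]
    nlinarith [h5, h3]
  have hCsq : C ^ 2 ≤ C := by nlinarith
  nlinarith [hbias, hVar, hCsq, hC2]
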